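/- The lattice RC(A^k) of right congruences on A^k, ordered by inclusion, is semimodular: it contains no sublattice a > b > c, a > d, c ∧ d = e, c ∨ d = a with d covering e. -/

import Mathlib

/-- Words of length `k` over `A`. -/
abbrev Word (A : Type*) (k : ℕ) := {w : List A // w.length = k}

/-- The shift action of a letter: `u.a` is the suffix of length `k` of `u a`. -/
def act {A : Type*} (k : ℕ) (a : A) (u : Word A k) : Word A k :=
  ⟨(u.val ++ [a]).drop ((u.val ++ [a]).length - k), by
    have h := u.2
    simp only [List.length_drop, List.length_append, List.length_cons,
      List.length_nil, h]
    omega⟩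

/-- A right congruence on `A^k`. -/
def IsRC {A : Type*} (k : ℕ) (r : Word A k → Word A k → Prop) : Prop :=
  Equivalence r ∧ ∀ u v : Word A k, r u v → ∀ a : A, r (act k a u) (act k a v)

/-- Containment of relations. -/
def Rle {A : Type*} {k : ℕ} (r r' : Word A k → Word A k → Prop) : Prop :=
  ∀ u v : Word A k, r u v → r' u v

/-- The join of two right congruences in `RC(A^k)`: the smallest right congruence
containing both. -/
def RCjoin {A : Type*} (k : ℕ) (σ τ : Word A k → Word A k → Prop)
    (u v : Word A k) : Prop :=
  ∀ μ : Word A k → Word A k → Prop, IsRC k μ → Rle σ μ → Rle τ μ → μ u v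

/-- Iterated action of a list of letters. -/
def actL {A : Type*} (k : ℕ) : List A → Word A k → Word A k
  | [], u => u
  | a :: w, u => actL k w (act k a u)

lemma actL_val {A : Type*} (k : ℕ) (w : List A) (u : Word A k) :
    (actL k w u).val = (u.val ++ w).drop w.length := by
  induction w generalizing u with
  | nil => simp [actL]
  | cons a t ih =>
    have hu : u.val.length = k := u.2
    have h1 : (act k a u).val = (u.val ++ [a]).drop 1 := by
      simp [act, hu]
    rw [show actL k (a :: t) u = actL k t (act k a u) from rfl, ih, h1]
    rw [← List.drop_append_of_le_length (show 1 ≤ (u.val ++ [a]).length by simp)]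
    rw [List.drop_drop]
    have h2 : u.val ++ [a] ++ t = u.val ++ (a :: t) := by simp
    rw [h2]
    congr 1
    simp [List.length_cons]
    omega

lemma actL_long {A : Type*} (k : ℕ) (w : List A) (hw : k ≤ w.length)
    (u v : Word A k) : actL k w u = actL k w v := by
  apply Subtype.ext
  rw [actL_val, actL_val]
  have key : ∀ l : List A, l.length = k → (l ++ w).drop w.length = w.drop (w.length - k) := by
    intro l hl
    rw [show w.length = l.length + (w.length - k) by omega, List.drop_append]
    congr 1
    rw [List.drop_of_length_le (by omega), List.nil_append]
    congr 1
    omega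
  rw [key u.val u.2, key v.val v.2]

/-- Descent: from a pair in `τ \ lam` we can find one all of whose one-letter
shifts are `lam`-related. -/
lemma descent {A : Type*} (k : ℕ) (τ lam : Word A k → Word A k → Prop)
    (hτ : IsRC k τ) (hlamr : ∀ u, lam u u) :
    ∀ n (x y : Word A k), τ x y → ¬ lam x y →
      (∀ w : List A, n ≤ w.length → actL k w x = actL k w y) →
      ∃ x' y', τ x' y' ∧ ¬ lam x' y' ∧ ∀ a : A, lam (act k a x') (act k a y') := by
  intro n
  induction n with
  | zero =>
    intro x y _ hnl hcol
    have hxy : x = y := hcol [] (by simp)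
    exact absurd (hxy ▸ hlamr x) hnl
  | succ n ih =>
    intro x y hτxy hnl hcol
    by_cases h : ∀ a : A, lam (act k a x) (act k a y)
    · exact ⟨x, y, hτxy, hnl, h⟩
    · push_neg at h
      obtain ⟨a, ha⟩ := h
      refine ih (act k a x) (act k a y) (hτ.2 x y hτxy a) ha ?_
      intro w hw
      have := hcol (a :: w) (by simp; omega)
      simpa [actL] using this

/-- Merging the classes of `x` and `y` into a congruence `β`, assuming all
one-letter shifts of `x,y` are already `β`-related. -/
def merge {A : Type*} {k : ℕ} (β : Word A k → Word A k → Prop)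
    (x y u v : Word A k) : Prop :=
  β u v ∨ (β u x ∧ β v y) ∨ (β u y ∧ β v x)

lemma merge_isRC {A : Type*} {k : ℕ} (β : Word A k → Word A k → Prop)
    (hβ : IsRC k β) (x y : Word A k)
    (hxy : ∀ a : A, β (act k a x) (act k a y)) : IsRC k (merge β x y) := by
  obtain ⟨E, C⟩ := hβ
  constructor
  · constructor
    · intro u; exact Or.inl (E.refl u)
    · intro u v h
      rcases h with h | ⟨h1, h2⟩ | ⟨h1, h2⟩
      · exact Or.inl (E.symm h)
      · exact Or.inr (Or.inr ⟨h2, h1⟩)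
      · exact Or.inr (Or.inl ⟨h2, h1⟩)
    · intro u v w h1 h2
      rcases h1 with h1 | ⟨ha, hb⟩ | ⟨ha, hb⟩ <;>
        rcases h2 with h2 | ⟨hc, hd⟩ | ⟨hc, hd⟩
      · exact Or.inl (E.trans h1 h2)
      · exact Or.inr (Or.inl ⟨E.trans h1 hc, hd⟩)
      · exact Or.inr (Or.inr ⟨E.trans h1 hc, hd⟩)
      · exact Or.inr (Or.inl ⟨ha, E.trans (E.symm h2) hb⟩)
      · -- β u x, β v y, β v x, β w y : then β x y, so all related
        have hxy' : β x y := E.trans (E.symm hc) hb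
        exact Or.inl (E.trans (E.trans ha hxy') (E.symm hd))
      · -- β u x, β v y, β v y, β w x
        exact Or.inl (E.trans ha (E.symm hd))
      · exact Or.inr (Or.inr ⟨ha, E.trans (E.symm h2) hb⟩)
      · -- β u y, β v x, β v x, β w y
        exact Or.inl (E.trans ha (E.symm hd))
      · -- β u y, β v x, β v y, β w x : β x y from hb, hc
        have hxy' : β x y := E.trans (E.symm hb) hc
        exact Or.inl (E.trans ha (E.symm (E.trans hd hxy')))
  · intro u v h a
    rcases h with h | ⟨h1, h2⟩ | ⟨h1, h2⟩
    · exact Or.inl (C u v h a)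
    · exact Or.inl (E.trans (E.trans (C u x h1 a) (hxy a)) (E.symm (C v y h2 a)))
    · exact Or.inl (E.trans (C u y h1 a) (E.symm (E.trans (C v x h2 a) (hxy a))))

/-- the lattice `RC(A^k)` is semimodular: it contains no sublattice
`ρ > σ' > σ > λ`, `ρ > τ > λ` with `σ' ∧ τ = λ`, `σ ∨ τ = ρ` and `τ` covering `λ`. -/
theorem RC_semimodular {A : Type*} [Fintype A] [Nonempty A] (k : ℕ) (hk : 1 ≤ k) :
    ¬ ∃ ρ σ σ' τ lam : Word A k → Word A k → Prop,
      IsRC k ρ ∧ IsRC k σ ∧ IsRC k σ' ∧ IsRC k τ ∧ IsRC k lam ∧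
      Rle lam σ ∧ lam ≠ σ ∧
      Rle σ σ' ∧ σ ≠ σ' ∧
      Rle σ' ρ ∧ σ' ≠ ρ ∧
      Rle lam τ ∧ lam ≠ τ ∧
      Rle τ ρ ∧ τ ≠ ρ ∧
      (∀ u v : Word A k, (σ' u v ∧ τ u v) ↔ lam u v) ∧
      (∀ u v : Word A k, RCjoin k σ τ u v ↔ ρ u v) ∧
      (∀ μ : Word A k → Word A k → Prop, IsRC k μ → Rle lam μ → Rle μ τ →
        μ = lam ∨ μ = τ) := by
  rintro ⟨ρ, σ, σ', τ, lam, hρ, hσ, hσ', hτ, hlam, hls, _, hss', hssne, hs'ρ, _,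
    hlt, hltne, htρ, _, hmeet, hjoin, hcov⟩
  -- there is a pair in τ \ lam
  have hpair : ∃ x y, τ x y ∧ ¬ lam x y := by
    by_contra h
    push_neg at h
    apply hltne
    funext u v
    exact propext ⟨hlt u v, h u v⟩
  obtain ⟨x0, y0, hτ0, hnl0⟩ := hpair
  -- descend to a pair whose one-letter shifts are lam-related
  obtain ⟨x, y, hτxy, hnlxy, hshift⟩ :=
    descent k τ lam hτ hlam.1.refl k x0 y0 hτ0 hnl0
      (fun w hw => actL_long k w hw x0 y0)
  -- μ := merge lam x y  is a right congruence between lam and τ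
  have hμRC : IsRC k (merge lam x y) := merge_isRC lam hlam x y hshift
  have hlμ : Rle lam (merge lam x y) := fun u v h => Or.inl h
  have hμτ : Rle (merge lam x y) τ := by
    intro u v h
    rcases h with h | ⟨h1, h2⟩ | ⟨h1, h2⟩
    · exact hlt u v h
    · exact hτ.1.trans (hτ.1.trans (hlt u x h1) hτxy) (hτ.1.symm (hlt v y h2))
    · exact hτ.1.trans (hτ.1.trans (hlt u y h1) (hτ.1.symm hτxy)) (hτ.1.symm (hlt v x h2))
  have hμxy : merge lam x y x y := Or.inr (Or.inl ⟨hlam.1.refl x, hlam.1.refl y⟩)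
  have hμeq : merge lam x y = τ := by
    rcases hcov (merge lam x y) hμRC hlμ hμτ with h | h
    · exact absurd (h ▸ hμxy) hnlxy
    · exact h
  have hτmerge : ∀ u v, τ u v → merge lam x y u v := by
    intro u v h; rw [hμeq]; exact h
  -- ν := merge σ x y is a right congruence above σ and τ, so above ρ
  have hshiftσ : ∀ a : A, σ (act k a x) (act k a y) := fun a => hls _ _ (hshift a)
  have hνRC : IsRC k (merge σ x y) := merge_isRC σ hσ x y hshiftσ
  have hσν : Rle σ (merge σ x y) := fun u v h => Or.inl h
  have hτν : Rle τ (merge σ x y) := by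
    intro u v h
    rcases hτmerge u v h with h | ⟨h1, h2⟩ | ⟨h1, h2⟩
    · exact Or.inl (hls u v h)
    · exact Or.inr (Or.inl ⟨hls u x h1, hls v y h2⟩)
    · exact Or.inr (Or.inr ⟨hls u y h1, hls v x h2⟩)
  -- a pair in σ' \ σ
  have hpq : ∃ p q, σ' p q ∧ ¬ σ p q := by
    by_contra h
    push_neg at h
    apply hssne
    funext u v
    exact propext ⟨hss' u v, h u v⟩
  obtain ⟨p, q, hσ'pq, hnσpq⟩ := hpq
  -- ρ p q, hence ν p q
  have hρpq : ρ p q := hs'ρ p q hσ'pq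
  have hνpq : merge σ x y p q := (hjoin p q).mpr hρpq (merge σ x y) hνRC hσν hτν
  -- τ x y (already have hτxy); derive contradiction from σ' ∧ τ = lam
  rcases hνpq with h | ⟨h1, h2⟩ | ⟨h1, h2⟩
  · exact hnσpq h
  · -- σ p x, σ q y : then σ' x y, so lam x y
    have hσ'xy : σ' x y :=
      hσ'.1.trans (hσ'.1.trans (hσ'.1.symm (hss' p x h1)) hσ'pq) (hss' q y h2)
    exact hnlxy ((hmeet x y).mp ⟨hσ'xy, hτxy⟩)
  · -- σ p y, σ q x : then σ' y x, so lam x y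
    have hσ'yx : σ' y x :=
      hσ'.1.trans (hσ'.1.trans (hσ'.1.symm (hss' p y h1)) hσ'pq) (hss' q x h2)
    exact hnlxy ((hmeet x y).mp ⟨hσ'.1.symm hσ'yx, hτxy⟩)
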